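/- There is an absolute constant C such that for every udpda A' of size m with stack alphabet Γ there exists a normal-form udpda A with stack alphabet Γ, at most C·m control states, and L(A) = L(A'). -/

import Mathlib

/-- The data of a unary pushdown automaton over the input alphabet `{a}`
(a transition whose `Bool` component is `true` reads `a`, otherwise it
reads `ε`): bottom-of-stack symbol, initial state, final states, transitions. -/
structure PrePDA (Q Γ : Type) where
  bot : Γ
  init : Q
  final : Set Q
  δ : Set (Q × Bool × Γ × Q × List Γ)

namespace PrePDA

variable {Q Γ : Type}

/-- Valid stack contents: a word in `(Γ∖{⊥})*⊥`. -/
def IsStack (A : PrePDA Q Γ) (s : List Γ) : Prop :=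
  ∃ s', A.bot ∉ s' ∧ s = s' ++ [A.bot]

/-- A move from configuration `c1` to `c2` reading `a` (if `σ = true`)
or `ε` (if `σ = false`). -/
def Move (A : PrePDA Q Γ) (c1 : Q × List Γ) (σ : Bool) (c2 : Q × List Γ) : Prop :=
  ∃ γ w, (c1.1, σ, γ, c2.1, w) ∈ A.δ ∧
    (((γ ≠ A.bot ∨ w ≠ []) ∧ ∃ s', c1.2 = γ :: s' ∧ c2.2 = w ++ s') ∨
      (γ = A.bot ∧ w = [] ∧ c1.2 = [A.bot] ∧ c2.2 = [A.bot]))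

/-- `Steps A c1 k c2`: there is a finite computation from `c1` to `c2`
reading the word `a^k`. -/
inductive Steps (A : PrePDA Q Γ) : Q × List Γ → ℕ → Q × List Γ → Prop
  | refl (c : Q × List Γ) : Steps A c 0 c
  | tail {c1 : Q × List Γ} {k : ℕ} {c2 : Q × List Γ} {σ : Bool} {c3 : Q × List Γ} :
      Steps A c1 k c2 → A.Move c2 σ c3 → Steps A c1 (k + (if σ then 1 else 0)) c3

/-- The language of the automaton, as a set of natural numbers:
`a^k` is accepted iff `k` is in this set (acceptance by final state,
starting from the configuration `(q₀, ⊥)`). -/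
def lang (A : PrePDA Q Γ) : Set ℕ :=
  {k | ∃ c : Q × List Γ, A.Steps (A.init, [A.bot]) k c ∧ c.1 ∈ A.final}

end PrePDA

/-- A unary deterministic pushdown automaton (udpda): finitely many states and
stack symbols, well-formed transitions (each pushed word has length at most 2,
and the bottom symbol is neither pushed above other symbols nor removed), and
at most one move available at every configuration. -/
structure UDPDA (Q Γ : Type) extends PrePDA Q Γ where
  finQ : Finite Q
  finΓ : Finite Γ
  wf : ∀ q1 σ γ q2 w, (q1, σ, γ, q2, w) ∈ δ →
    w.length ≤ 2 ∧
      ((γ ≠ bot ∧ bot ∉ w) ∨ (γ = bot ∧ (w = [] ∨ ∃ w', bot ∉ w' ∧ w = w' ++ [bot])))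
  det : ∀ c σ1 c1 σ2 c2, toPrePDA.IsStack c.2 →
    toPrePDA.Move c σ1 c1 → toPrePDA.Move c σ2 c2 → σ1 = σ2 ∧ c1 = c2

namespace UDPDA

variable {Q Γ : Type}

/-- The size of a udpda: `|Q| · |Γ|`. -/
noncomputable def size (A : UDPDA Q Γ) : ℕ := Nat.card Q * Nat.card Γ

/-- The language of a udpda. -/
def lang (A : UDPDA Q Γ) : Set ℕ := A.toPrePDA.lang

end UDPDA

/-- The auxiliary alphabet `{a, f}` used in transcripts of computations. -/
inductive AF
  | a
  | f
deriving DecidableEq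

/-- The kind of a control state of a normal-form udpda: internal, push, or pop. -/
inductive StKind
  | internal
  | push
  | pop
deriving DecidableEq

/-- A normal-form udpda: the state set is partitioned (by `kind`) into internal
states `Q₀`, push states `Q₊₁` and pop states `Q₋₁`, with total transition
functions `δint`, `δpush`, `δpop`, and `reads q = true` iff the transitions
from `q` read the input symbol `a` (i.e. `q ∈ R`). -/
structure NFPDA (Q Γ : Type) where
  finQ : Finite Q
  finΓ : Finite Γ
  bot : Γ
  init : Q
  final : Set Q
  kind : Q → StKind
  δint : Q → Q
  δpush : Q → Q × Γ
  δpop : Q → Γ → Q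
  reads : Q → Bool

namespace NFPDA

variable {Q Γ : Type}

/-- Valid stack contents: a word in `(Γ∖{⊥})*⊥`. -/
def IsStack (A : NFPDA Q Γ) (s : List Γ) : Prop :=
  ∃ s', A.bot ∉ s' ∧ s = s' ++ [A.bot]

/-- The unique move available at a configuration.  (A pop transition with the
bottom symbol on top of the stack leaves the stack unchanged; on valid stacks
the bottom symbol is on top exactly when the stack is a singleton.) -/
def step (A : NFPDA Q Γ) : Q × List Γ → Q × List Γ := fun c =>
  match A.kind c.1 with
  | .internal => (A.δint c.1, c.2)
  | .push => ((A.δpush c.1).1, (A.δpush c.1).2 :: c.2)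
  | .pop =>
    match c.2 with
    | [] => (c.1, [])
    | [γ] => (A.δpop c.1 γ, [γ])
    | γ :: s' => (A.δpop c.1 γ, s')

/-- The configuration reached after `k` moves of the unique infinite
computation starting at `c`. -/
def iter (A : NFPDA Q Γ) (c : Q × List Γ) (k : ℕ) : Q × List Γ := A.step^[k] c

open Classical in
/-- The contribution `μ(q)σ` of one move from state `q` to the transcript:
`f` if `q` is final, followed by `a` if the move reads an input symbol. -/
noncomputable def emit (A : NFPDA Q Γ) (q : Q) : List AF :=
  (if q ∈ A.final then [AF.f] else []) ++ (if A.reads q then [AF.a] else [])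

/-- The transcript `μ(q₁)σ₁μ(q₂)σ₂⋯μ(q_k)σ_k` of the first `k` moves of the
computation starting at `c`. -/
noncomputable def transcriptN (A : NFPDA Q Γ) (c : Q × List Γ) (k : ℕ) : List AF :=
  ((List.range k).map fun i => A.emit (A.iter c i).1).flatten

/-- The number of input symbols read during the first `k` moves of the
computation starting at `c`. -/
def readCount (A : NFPDA Q Γ) (c : Q × List Γ) (k : ℕ) : ℕ :=
  ((List.range k).filter fun i => A.reads (A.iter c i).1).length

/-- The language of a normal-form udpda: `a^n` is accepted iff the unique
computation starting at `(q₀, ⊥)` reaches a final state having read exactly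
`n` input symbols. -/
def lang (A : NFPDA Q Γ) : Set ℕ :=
  {n | ∃ k, A.readCount (A.init, [A.bot]) k = n ∧ (A.iter (A.init, [A.bot]) k).1 ∈ A.final}

end NFPDA

namespace UDPDAtoNF

variable {Q Γ : Type} (A' : UDPDA Q Γ)

/-- States of the normal-form machine: base states, decide states, mid-push states. -/
abbrev St (Q Γ : Type) : Type := Q ⊕ ((Q × Γ) ⊕ (Q × Γ))

open Classical in
/-- The (unique up to semantics) transition of `A'` from state `q` with top symbol `γ`. -/
noncomputable def sel (q : Q) (γ : Γ) : Option (Bool × Q × List Γ) :=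
  if h : ∃ t : Bool × Q × List Γ, (q, t.1, γ, t.2.1, t.2.2) ∈ A'.δ then some h.choose else none

open Classical in
/-- The effective pushed word (above the remaining stack). -/
noncomputable def eff (γ : Γ) (w : List Γ) : List Γ :=
  if γ = A'.bot then w.dropLast else w

lemma sel_mem {q : Q} {γ : Γ} {σ : Bool} {q2 : Q} {w : List Γ}
    (h : sel A' q γ = some (σ, q2, w)) : (q, σ, γ, q2, w) ∈ A'.δ := by
  classical
  unfold sel at h
  split at h
  · rename_i hex
    have h2 : hex.choose = (σ, q2, w) := Option.some.inj h
    have h3 := hex.choose_spec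
    rw [h2] at h3
    exact h3
  · exact absurd h (by simp)

lemma sel_isSome {q : Q} {γ : Γ} {σ : Bool} {q2 : Q} {w : List Γ}
    (h : (q, σ, γ, q2, w) ∈ A'.δ) : ∃ t, sel A' q γ = some t := by
  classical
  unfold sel
  rw [dif_pos ⟨(σ, q2, w), h⟩]
  exact ⟨_, rfl⟩

open Classical in
/-- The normal-form udpda simulating `A'`. -/
noncomputable def NF : NFPDA (St Q Γ) Γ where
  finQ := by have := A'.finQ; have := A'.finΓ; infer_instance
  finΓ := A'.finΓ
  bot := A'.bot
  init := .inl A'.init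
  final := Sum.inl '' A'.final
  kind
    | .inl _ => .pop
    | .inr (.inr _) => .push
    | .inr (.inl (q, γ)) =>
        match sel A' q γ with
        | none => .internal
        | some (_, _, w) => if eff A' γ w = [] then .internal else .push
  δint
    | .inr (.inl (q, γ)) =>
        match sel A' q γ with
        | none => .inr (.inl (q, γ))
        | some (_, q2, _) => .inl q2
    | s => s
  δpush
    | .inr (.inr (q2, x)) => (.inl q2, x)
    | .inr (.inl (q, γ)) =>
        match sel A' q γ with
        | some (_, q2, w) =>
            match eff A' γ w with
            | [x] => (.inl q2, x)
            | x :: y :: _ => (.inr (.inr (q2, x)), y)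
            | _ => (.inl q2, A'.bot)
        | none => (.inr (.inl (q, γ)), γ)
    | s => (s, A'.bot)
  δpop
    | .inl q, γ => .inr (.inl (q, γ))
    | s, _ => s
  reads
    | .inr (.inl (q, γ)) =>
        match sel A' q γ with
        | some (σ, _, _) => σ
        | none => false
    | _ => false

/-- The shape of a valid stack: `γ` is the top symbol and `t` what remains after popping. -/
def Shape (γ : Γ) (s t : List Γ) : Prop :=
  (γ = A'.bot ∧ s = [A'.bot] ∧ t = [A'.bot]) ∨ (γ ≠ A'.bot ∧ s = γ :: t ∧ t ≠ [])

lemma shape_exists {s : List Γ} (hs : A'.toPrePDA.IsStack s) :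
    ∃ γ t, Shape A' γ s t := by
  obtain ⟨u, hu, rfl⟩ := hs
  cases u with
  | nil => exact ⟨A'.bot, [A'.bot], Or.inl ⟨rfl, rfl, rfl⟩⟩
  | cons c u' =>
      refine ⟨c, u' ++ [A'.bot], Or.inr ⟨?_, rfl, by simp⟩⟩
      intro hc; exact hu (by simp [hc])

lemma shape_isStack {γ : Γ} {s t : List Γ} (h : Shape A' γ s t)
    (hs : A'.toPrePDA.IsStack s) : A'.toPrePDA.IsStack t := by
  rcases h with ⟨_, _, rfl⟩ | ⟨hγ, rfl, ht⟩
  · exact ⟨[], by simp, rfl⟩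
  · obtain ⟨u, hu, he⟩ := hs
    cases u with
    | nil =>
        have h2 : γ = A'.bot ∧ t = [] := by simpa using he
        exact absurd h2.1 hγ
    | cons c u' =>
        have h2 : γ = c ∧ t = u' ++ [A'.bot] := by simpa using he
        exact ⟨u', fun h' => hu (by simp [h']), h2.2⟩

/-- The selected transition yields an actual move, whose target stack is `eff γ w ++ t`. -/
lemma move_of_sel {q : Q} {γ : Γ} {σ : Bool} {q2 : Q} {w : List Γ} {s t : List Γ}
    (hsel : sel A' q γ = some (σ, q2, w)) (hsh : Shape A' γ s t) :
    A'.toPrePDA.Move (q, s) σ (q2, eff A' γ w ++ t) ∧ A'.bot ∉ eff A' γ w := by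
  classical
  have hmem := sel_mem A' hsel
  have hwf := A'.wf q σ γ q2 w hmem
  rcases hsh with ⟨hγ, hs, htt⟩ | ⟨hγ, hs, htne⟩
  · -- γ = bot, s = t = [bot]
    subst hγ
    rcases hwf.2 with ⟨hne, _⟩ | ⟨_, hw⟩
    · exact absurd rfl hne
    rcases hw with rfl | ⟨w', hw', rfl⟩
    · refine ⟨⟨A'.bot, [], hmem, Or.inr ⟨rfl, rfl, hs, ?_⟩⟩, ?_⟩
      · simp [eff, htt]
      · simp [eff]
    · have heff : eff A' A'.bot (w' ++ [A'.bot]) = w' := by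
        simp [eff]
      refine ⟨⟨A'.bot, w' ++ [A'.bot], hmem, Or.inl ⟨Or.inr (by simp), [], ?_, ?_⟩⟩, ?_⟩
      · simp [hs]
      · simp [heff, htt]
      · simp [heff, hw']
  · -- γ ≠ bot, s = γ :: t
    rcases hwf.2 with ⟨_, hw⟩ | ⟨he, _⟩
    · have heff : eff A' γ w = w := by simp [eff, hγ]
      exact ⟨⟨γ, w, hmem, Or.inl ⟨Or.inl hγ, t, hs, by simp [heff]⟩⟩, by simp [heff, hw]⟩
    · exact absurd he hγ

lemma isStack_eff {γ : Γ} {w t : List Γ} (hb : A'.bot ∉ eff A' γ w)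
    (ht : A'.toPrePDA.IsStack t) : A'.toPrePDA.IsStack (eff A' γ w ++ t) := by
  obtain ⟨v, hv, rfl⟩ := ht
  exact ⟨eff A' γ w ++ v, by simp [hb, hv], by simp⟩

/-- Any actual move of `A'` coincides with the selected one. -/
lemma move_unique {q : Q} {γ : Γ} {σ : Bool} {c2 : Q × List Γ} {s t : List Γ}
    (hst : A'.toPrePDA.IsStack s) (hsh : Shape A' γ s t)
    (hm : A'.toPrePDA.Move (q, s) σ c2) :
    ∃ w, sel A' q γ = some (σ, c2.1, w) ∧ c2.2 = eff A' γ w ++ t := by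
  obtain ⟨γ', w', hmem, hbr⟩ := hm
  have hγ' : γ' = γ := by
    rcases hbr with ⟨_, s', hs', _⟩ | ⟨hb, _, hs', _⟩
    · replace hs' : s = γ' :: s' := hs'
      rcases hsh with ⟨hγ, hs, _⟩ | ⟨hγ, hs, _⟩
      · rw [hs] at hs'
        obtain ⟨h1, h2⟩ : A'.bot = γ' ∧ [] = s' := by simpa using hs'
        rw [hγ]; exact h1.symm
      · rw [hs] at hs'
        obtain ⟨h1, h2⟩ : γ = γ' ∧ t = s' := by simpa using hs'
        exact h1.symm
    · replace hs' : s = [A'.bot] := hs'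
      rcases hsh with ⟨hγ, _, _⟩ | ⟨hγ, hs, _⟩
      · rw [hb, hγ]
      · rw [hs] at hs'
        obtain ⟨h1, h2⟩ : γ = A'.bot ∧ t = [] := by simpa using hs'
        exact absurd h1 hγ
  rw [hγ'] at hmem hbr
  obtain ⟨⟨σ0, q0, w0⟩, hsel⟩ := sel_isSome A' hmem
  obtain ⟨hmv0, _⟩ := move_of_sel A' hsel hsh
  obtain ⟨hσ, hc⟩ := A'.det (q, s) σ0 (q0, eff A' γ w0 ++ t) σ c2 hst hmv0 ⟨γ, w', hmem, hbr⟩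
  subst hσ
  refine ⟨w0, ?_, ?_⟩
  · rw [hsel, ← hc]
  · rw [← hc]

/-! ### Computation lemmas for the normal-form machine -/

lemma reads_inl (q : Q) : (NF A').reads (.inl q) = false := rfl

lemma reads_mid (p : Q × Γ) : (NF A').reads (.inr (.inr p)) = false := rfl

lemma reads_dec_none {q : Q} {γ : Γ} (h : sel A' q γ = none) :
    (NF A').reads (.inr (.inl (q, γ))) = false := by
  simp [NF, h]

lemma reads_dec_some {q : Q} {γ : Γ} {σ : Bool} {q2 : Q} {w : List Γ}
    (h : sel A' q γ = some (σ, q2, w)) :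
    (NF A').reads (.inr (.inl (q, γ))) = σ := by
  simp [NF, h]

lemma step_inl_bot (q : Q) (γ : Γ) :
    (NF A').step (.inl q, [γ]) = (.inr (.inl (q, γ)), [γ]) := rfl

lemma step_inl_cons (q : Q) (γ a : Γ) (t : List Γ) :
    (NF A').step (.inl q, γ :: a :: t) = (.inr (.inl (q, γ)), a :: t) := rfl

lemma step_mid (q2 : Q) (x : Γ) (t : List Γ) :
    (NF A').step (.inr (.inr (q2, x)), t) = (.inl q2, x :: t) := rfl

lemma step_dec_none {q : Q} {γ : Γ} (h : sel A' q γ = none) (t : List Γ) :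
    (NF A').step (.inr (.inl (q, γ)), t) = (.inr (.inl (q, γ)), t) := by
  have hk : (NF A').kind (.inr (.inl (q, γ))) = .internal := by simp [NF, h]
  have hi : (NF A').δint (.inr (.inl (q, γ))) = .inr (.inl (q, γ)) := by simp [NF, h]
  simp [NFPDA.step, hk, hi]

lemma step_dec_nil {q : Q} {γ : Γ} {σ : Bool} {q2 : Q} {w : List Γ}
    (h : sel A' q γ = some (σ, q2, w)) (he : eff A' γ w = []) (t : List Γ) :
    (NF A').step (.inr (.inl (q, γ)), t) = (.inl q2, t) := by
  have hk : (NF A').kind (.inr (.inl (q, γ))) = .internal := by simp [NF, h, he]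
  have hi : (NF A').δint (.inr (.inl (q, γ))) = .inl q2 := by simp [NF, h]
  simp [NFPDA.step, hk, hi]

lemma step_dec_one {q : Q} {γ : Γ} {σ : Bool} {q2 : Q} {w : List Γ} {x : Γ}
    (h : sel A' q γ = some (σ, q2, w)) (he : eff A' γ w = [x]) (t : List Γ) :
    (NF A').step (.inr (.inl (q, γ)), t) = (.inl q2, x :: t) := by
  have hk : (NF A').kind (.inr (.inl (q, γ))) = .push := by simp [NF, h, he]
  have hi : (NF A').δpush (.inr (.inl (q, γ))) = (.inl q2, x) := by simp [NF, h, he]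
  simp [NFPDA.step, hk, hi]

lemma step_dec_two {q : Q} {γ : Γ} {σ : Bool} {q2 : Q} {w : List Γ} {x y : Γ} {r : List Γ}
    (h : sel A' q γ = some (σ, q2, w)) (he : eff A' γ w = x :: y :: r) (t : List Γ) :
    (NF A').step (.inr (.inl (q, γ)), t) = (.inr (.inr (q2, x)), y :: t) := by
  have hk : (NF A').kind (.inr (.inl (q, γ))) = .push := by simp [NF, h, he]
  have hi : (NF A').δpush (.inr (.inl (q, γ))) = (.inr (.inr (q2, x)), y) := by
    simp [NF, h, he]
  simp [NFPDA.step, hk, hi]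

lemma iter_succ {Q' Γ' : Type} (B : NFPDA Q' Γ') (c : Q' × List Γ') (k : ℕ) :
    B.iter c (k + 1) = B.step (B.iter c k) :=
  Function.iterate_succ_apply' _ _ _

lemma iter_add {Q' Γ' : Type} (B : NFPDA Q' Γ') (c : Q' × List Γ') (k j : ℕ) :
    B.iter c (k + j) = B.iter (B.iter c k) j := by
  show B.step^[k + j] c = B.step^[j] (B.step^[k] c)
  rw [add_comm]
  exact Function.iterate_add_apply _ _ _ _

lemma rc_succ {Q' Γ' : Type} (B : NFPDA Q' Γ') (c : Q' × List Γ') (k : ℕ) :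
    B.readCount c (k + 1) =
      B.readCount c k + (if B.reads (B.iter c k).1 then 1 else 0) := by
  simp only [NFPDA.readCount, List.range_succ, List.filter_append]
  rw [List.length_append]
  congr 1
  by_cases h : B.reads (B.iter c k).1 <;> simp [h]

lemma rc_add {Q' Γ' : Type} (B : NFPDA Q' Γ') (c : Q' × List Γ') (k j : ℕ) :
    B.readCount c (k + j) = B.readCount c k + B.readCount (B.iter c k) j := by
  induction j with
  | zero => simp [NFPDA.readCount]
  | succ j ih =>
      rw [← add_assoc, rc_succ, ih, rc_succ, iter_add, add_assoc]

lemma rc_zero {Q' Γ' : Type} (B : NFPDA Q' Γ') (c : Q' × List Γ') :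
    B.readCount c 0 = 0 := by simp [NFPDA.readCount]

lemma rc_one {Q' Γ' : Type} (B : NFPDA Q' Γ') (c : Q' × List Γ') :
    B.readCount c 1 = (if B.reads c.1 then 1 else 0) := by
  have := rc_succ B c 0
  rw [rc_zero, zero_add, zero_add] at this
  exact this

lemma iter_zero {Q' Γ' : Type} (B : NFPDA Q' Γ') (c : Q' × List Γ') : B.iter c 0 = c := rfl

lemma eff_length_le {q : Q} {γ : Γ} {σ : Bool} {q2 : Q} {w : List Γ}
    (h : sel A' q γ = some (σ, q2, w)) : (eff A' γ w).length ≤ 2 := by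
  classical
  have hlen := (A'.wf _ _ _ _ _ (sel_mem A' h)).1
  unfold eff
  split
  · simp only [List.length_dropLast]; omega
  · exact hlen

/-- From a decide state, the machine reaches the target base state in one or two
moves, reading `σ`. -/
lemma gadget {q : Q} {γ : Γ} {σ : Bool} {q2 : Q} {w : List Γ}
    (h : sel A' q γ = some (σ, q2, w)) (t : List Γ) :
    ∃ j, (NF A').iter (.inr (.inl (q, γ)), t) j = (.inl q2, eff A' γ w ++ t) ∧
      (NF A').readCount (.inr (.inl (q, γ)), t) j = (if σ then 1 else 0) := by
  have hle := eff_length_le A' h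
  have hrd := reads_dec_some A' h
  cases heff : eff A' γ w with
  | nil =>
      refine ⟨1, ?_, ?_⟩
      · rw [show (1 : ℕ) = 0 + 1 from rfl, iter_succ, iter_zero,
          step_dec_nil A' h heff]
        simp
      · rw [rc_one]; simp [hrd]
  | cons x r =>
      cases r with
      | nil =>
          refine ⟨1, ?_, ?_⟩
          · rw [show (1 : ℕ) = 0 + 1 from rfl, iter_succ, iter_zero,
              step_dec_one A' h heff]
            rfl
          · rw [rc_one]; simp [hrd]
      | cons y r2 =>
          have hr2 : r2 = [] := by
            rw [heff] at hle
            simp only [List.length_cons] at hle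
            exact List.eq_nil_of_length_eq_zero (by omega)
          subst hr2
          have h1 : (NF A').iter (.inr (.inl (q, γ)), t) 1 = (.inr (.inr (q2, x)), y :: t) := by
            rw [show (1 : ℕ) = 0 + 1 from rfl, iter_succ, iter_zero, step_dec_two A' h heff]
          refine ⟨2, ?_, ?_⟩
          · rw [show (2 : ℕ) = 1 + 1 from rfl, iter_succ, h1, step_mid]
            rfl
          · rw [show (2 : ℕ) = 1 + 1 from rfl, rc_succ, rc_one, h1]
            simp [hrd, reads_mid]

/-- One move of `A'` is simulated by finitely many moves of the normal-form
machine, reading the same input. -/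
lemma fwd_step {q : Q} {s : List Γ} {σ : Bool} {c3 : Q × List Γ}
    (hst : A'.toPrePDA.IsStack s) (hm : A'.toPrePDA.Move (q, s) σ c3) :
    A'.toPrePDA.IsStack c3.2 ∧ ∃ j,
      (NF A').iter (.inl q, s) j = (.inl c3.1, c3.2) ∧
      (NF A').readCount (.inl q, s) j = (if σ then 1 else 0) := by
  obtain ⟨γ, t, hsh⟩ := shape_exists A' hst
  obtain ⟨w, hsel, hc3⟩ := move_unique A' hst hsh hm
  have hbot : A'.bot ∉ eff A' γ w := (move_of_sel A' hsel hsh).2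
  have hstt : A'.toPrePDA.IsStack t := shape_isStack A' hsh hst
  have hstep1 : (NF A').iter (.inl q, s) 1 = (.inr (.inl (q, γ)), t) := by
    rw [show (1 : ℕ) = 0 + 1 from rfl, iter_succ, iter_zero]
    rcases hsh with ⟨hγ, hs, ht⟩ | ⟨hγ, hs, ht⟩
    · rw [hs, ht, hγ]; exact step_inl_bot A' q A'.bot
    · rw [hs]
      cases t with
      | nil => exact absurd rfl ht
      | cons a t' => exact step_inl_cons A' q γ a t'
  constructor
  · rw [hc3]; exact isStack_eff A' hbot hstt
  · obtain ⟨j, hj1, hj2⟩ := gadget A' hsel t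
    refine ⟨1 + j, ?_, ?_⟩
    · rw [iter_add, hstep1, hj1, hc3]
    · rw [rc_add, hstep1, hj2, rc_one]
      simp [reads_inl]

/-- Every computation of `A'` is simulated by the normal-form machine. -/
lemma fwd {src : Q × List Γ} {n : ℕ} {c : Q × List Γ}
    (h : A'.toPrePDA.Steps src n c) (hst : A'.toPrePDA.IsStack src.2) :
    A'.toPrePDA.IsStack c.2 ∧ ∃ j,
      (NF A').iter (.inl src.1, src.2) j = (.inl c.1, c.2) ∧
      (NF A').readCount (.inl src.1, src.2) j = n := by
  induction h with
  | refl => exact ⟨hst, 0, iter_zero _ _, rc_zero _ _⟩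
  | tail h1 hm ih =>
      obtain ⟨hst2, j, hj1, hj2⟩ := ih
      obtain ⟨hst3, j2, hk1, hk2⟩ := fwd_step A' hst2 hm
      refine ⟨hst3, j + j2, ?_, ?_⟩
      · rw [iter_add, hj1, hk1]
      · rw [rc_add, hj1, hj2, hk2]

lemma step_inl_shape {q : Q} {γ : Γ} {s t : List Γ} (hsh : Shape A' γ s t) :
    (NF A').step (.inl q, s) = (.inr (.inl (q, γ)), t) := by
  rcases hsh with ⟨hγ, hs, ht⟩ | ⟨hγ, hs, ht⟩
  · rw [hs, ht, hγ]; exact step_inl_bot A' q A'.bot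
  · rw [hs]
    cases t with
    | nil => exact absurd rfl ht
    | cons a t' => exact step_inl_cons A' q γ a t'

/-- The invariant satisfied by every configuration of the run of the
normal-form machine. -/
lemma inv (k : ℕ) :
    (∃ q s, (NF A').iter (.inl A'.init, [A'.bot]) k = (.inl q, s) ∧
        A'.toPrePDA.IsStack s ∧
        A'.toPrePDA.Steps (A'.init, [A'.bot])
          ((NF A').readCount (.inl A'.init, [A'.bot]) k) (q, s)) ∨
    (∃ q γ t s, (NF A').iter (.inl A'.init, [A'.bot]) k = (.inr (.inl (q, γ)), t) ∧
        A'.toPrePDA.IsStack s ∧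
        A'.toPrePDA.Steps (A'.init, [A'.bot])
          ((NF A').readCount (.inl A'.init, [A'.bot]) k) (q, s) ∧ Shape A' γ s t) ∨
    (∃ q2 x t, (NF A').iter (.inl A'.init, [A'.bot]) k = (.inr (.inr (q2, x)), t) ∧
        A'.toPrePDA.IsStack (x :: t) ∧
        A'.toPrePDA.Steps (A'.init, [A'.bot])
          ((NF A').readCount (.inl A'.init, [A'.bot]) k) (q2, x :: t)) ∨
    (∃ q γ t, (NF A').iter (.inl A'.init, [A'.bot]) k = (.inr (.inl (q, γ)), t) ∧
        sel A' q γ = none) := by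
  induction k with
  | zero =>
      left
      exact ⟨A'.init, [A'.bot], rfl, ⟨[], by simp, rfl⟩,
        by rw [rc_zero]; exact .refl _⟩
  | succ k ih =>
      rcases ih with ⟨q, s, hit, hst, hstep⟩ | ⟨q, γ, t, s, hit, hst, hstep, hsh⟩ |
        ⟨q2, x, t, hit, hst, hstep⟩ | ⟨q, γ, t, hit, hsel⟩
      · -- base state: pop the top symbol
        obtain ⟨γ, t, hsh⟩ := shape_exists A' hst
        right; left
        refine ⟨q, γ, t, s, ?_, hst, ?_, hsh⟩
        · rw [iter_succ, hit, step_inl_shape A' hsh]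
        · rw [rc_succ, hit]
          simpa [reads_inl] using hstep
      · -- decide state
        cases hsel : sel A' q γ with
        | none =>
            right; right; right
            exact ⟨q, γ, t, by rw [iter_succ, hit, step_dec_none A' hsel], hsel⟩
        | some v =>
            obtain ⟨σ, q2, w⟩ := v
            obtain ⟨hmv, hbot⟩ := move_of_sel A' hsel hsh
            have hst2 : A'.toPrePDA.IsStack (eff A' γ w ++ t) :=
              isStack_eff A' hbot (shape_isStack A' hsh hst)
            have hsteps2 := hstep.tail hmv
            have hrc : (NF A').readCount (.inl A'.init, [A'.bot]) (k + 1) =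
                (NF A').readCount (.inl A'.init, [A'.bot]) k + (if σ then 1 else 0) := by
              rw [rc_succ, hit]
              simp [reads_dec_some A' hsel]
            cases heff : eff A' γ w with
            | nil =>
                left
                refine ⟨q2, t, ?_, ?_, ?_⟩
                · rw [iter_succ, hit, step_dec_nil A' hsel heff]
                · rw [heff] at hst2; simpa using hst2
                · rw [hrc]
                  rw [heff] at hsteps2; simpa using hsteps2
            | cons x r =>
                cases r with
                | nil =>
                    left
                    refine ⟨q2, x :: t, ?_, ?_, ?_⟩
                    · rw [iter_succ, hit, step_dec_one A' hsel heff]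
                    · rw [heff] at hst2; simpa using hst2
                    · rw [hrc]
                      rw [heff] at hsteps2; simpa using hsteps2
                | cons y r2 =>
                    have hr2 : r2 = [] := by
                      have hle := eff_length_le A' hsel
                      rw [heff] at hle
                      simp only [List.length_cons] at hle
                      exact List.eq_nil_of_length_eq_zero (by omega)
                    subst hr2
                    right; right; left
                    refine ⟨q2, x, y :: t, ?_, ?_, ?_⟩
                    · rw [iter_succ, hit, step_dec_two A' hsel heff]
                    · rw [heff] at hst2; simpa using hst2
                    · rw [hrc]
                      rw [heff] at hsteps2; simpa using hsteps2
      · -- mid-push state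
        left
        refine ⟨q2, x :: t, ?_, hst, ?_⟩
        · rw [iter_succ, hit, step_mid]
        · rw [rc_succ, hit]
          simpa [reads_mid] using hstep
      · -- dead state
        right; right; right
        exact ⟨q, γ, t, by rw [iter_succ, hit, step_dec_none A' hsel], hsel⟩

end UDPDAtoNF

/-- There is an absolute constant `C` such that every udpda
`A'` of size `m` with stack alphabet `Γ` admits an equivalent normal-form
udpda with the same stack alphabet `Γ` and at most `C·m` control states. -/
theorem udpda_normal_form :
    ∃ C : ℕ, ∀ (Q Γ : Type) (A' : UDPDA Q Γ),
      ∃ (Q' : Type) (A : NFPDA Q' Γ),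
        Nat.card Q' ≤ C * A'.size ∧ A.lang = A'.lang := by
  refine ⟨3, fun Q Γ A' => ?_⟩
  haveI : Finite Q := A'.finQ
  haveI : Finite Γ := A'.finΓ
  haveI : Nonempty Γ := ⟨A'.bot⟩
  have hΓ : 0 < Nat.card Γ := Nat.card_pos
  refine ⟨UDPDAtoNF.St Q Γ, UDPDAtoNF.NF A', ?_, ?_⟩
  · have hcard : Nat.card (UDPDAtoNF.St Q Γ) =
        Nat.card Q + (Nat.card Q * Nat.card Γ + Nat.card Q * Nat.card Γ) := by
      simp [UDPDAtoNF.St, Nat.card_sum, Nat.card_prod]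
    rw [hcard]
    show _ ≤ 3 * (Nat.card Q * Nat.card Γ)
    have h1 : Nat.card Q ≤ Nat.card Q * Nat.card Γ := Nat.le_mul_of_pos_right _ hΓ
    linarith
  · have hC : (((UDPDAtoNF.NF A').init : UDPDAtoNF.St Q Γ), [(UDPDAtoNF.NF A').bot]) =
        ((Sum.inl A'.init : UDPDAtoNF.St Q Γ), [A'.bot]) := rfl
    ext n
    simp only [NFPDA.lang, UDPDA.lang, PrePDA.lang, Set.mem_setOf_eq]
    constructor
    · rintro ⟨k, hrc, hfin⟩
      rw [hC] at hrc hfin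
      rcases UDPDAtoNF.inv A' k with ⟨q, s, hit, hst, hstep⟩ |
        ⟨q, γ, t, s, hit, _, _, _⟩ | ⟨q2, x, t, hit, _, _⟩ | ⟨q, γ, t, hit, _⟩
      · rw [hit] at hfin
        obtain ⟨q', hq', he⟩ := hfin
        rw [hrc] at hstep
        exact ⟨(q, s), hstep, by rwa [Sum.inl.inj he] at hq'⟩
      · rw [hit] at hfin
        obtain ⟨q', _, he⟩ := hfin
        exact absurd he (by simp)
      · rw [hit] at hfin
        obtain ⟨q', _, he⟩ := hfin
        exact absurd he (by simp)
      · rw [hit] at hfin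
        obtain ⟨q', _, he⟩ := hfin
        exact absurd he (by simp)
    · rintro ⟨c, hstep, hfin⟩
      obtain ⟨_, j, hj1, hj2⟩ := UDPDAtoNF.fwd A' hstep ⟨[], by simp, rfl⟩
      refine ⟨j, ?_, ?_⟩
      · rw [hC]; exact hj2
      · rw [hC, hj1]
        exact ⟨c.1, hfin, rfl⟩
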